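/- Let A = ℤ/2ℤ × ℤ/2ℤ and B = ℤ/3ℤ. Fix an automorphism α of A and an automorphism β of B, and define the subgroups of (A × B) × (A × B × B): H = {((a,b),(α(a), β(b), 0)) : a ∈ A, b ∈ B} and H' = {((a,b),(α(a), 0, β(b))) : a ∈ A, b ∈ B}. For φ an automorphism of A and ε, δ automorphisms of B, let T(φ,ε,δ) be the automorphism of (A × B) × (A × B × B) sending ((a,b),(a',b',b'')) to ((φ(a), ε(b)), (a', δ(b'), δ(b''))). Then T(φ,ε,δ) maps H onto H if and only if φ = id and ε = δ; and likewise T(φ,ε,δ) maps H' onto H' if and only if φ = id and ε = δ. -/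

import Mathlib

/-- `A = ℤ/2 × ℤ/2`, the `(ℤ/2)²`-part of the discriminant groups. -/
abbrev A2 : Type := ZMod 2 × ZMod 2

/-- `B = ℤ/3`. -/
abbrev B3 : Type := ZMod 3

/-- The ambient group `(A × B) × (A × B × B) = D(S) × D(T)`. -/
abbrev W : Type := (A2 × B3) × (A2 × B3 × B3)

/-- The glueing subgroup `H = {((a,b),(α(a), β(b), 0))}`. -/
def Hsub (α : A2 ≃+ A2) (β : B3 ≃+ B3) : Set W :=
  {p | ∃ a b, p = ((a, b), (α a, β b, 0))}

/-- The glueing subgroup `H' = {((a,b),(α(a), 0, β(b)))}`. -/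
def H'sub (α : A2 ≃+ A2) (β : B3 ≃+ B3) : Set W :=
  {p | ∃ a b, p = ((a, b), (α a, 0, β b))}

/-- The automorphism `T(φ,ε,δ)` of `(A × B) × (A × B × B)` sending
`((a,b),(a',b',b''))` to `((φ(a), ε(b)), (a', δ(b'), δ(b'')))`. -/
def Tmap (φ : A2 ≃+ A2) (ε δ : B3 ≃+ B3) : W → W :=
  fun p => ((φ p.1.1, ε p.1.2), (p.2.1, δ p.2.2.1, δ p.2.2.2))

lemma b3_eq (f : B3 ≃+ B3) (x : B3) : f x = f 1 * x := by
  have h : f (1 + 1) = f 1 + f 1 := map_add f 1 1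
  fin_cases x
  · show f 0 = f 1 * 0; simp
  · show f 1 = f 1 * 1; simp
  · have : ((⟨2, by norm_num⟩ : Fin 3) : B3) = 1 + 1 := by decide
    rw [this]; show f (1 + 1) = f 1 * (1 + 1); rw [h]; ring

lemma b3_one_ne (f : B3 ≃+ B3) : f 1 ≠ 0 := by
  intro h
  have := f.injective (h.trans (map_zero f).symm)
  simp at this

lemma b3_comm (f g : B3 ≃+ B3) (x : B3) : f (g x) = g (f x) := by
  rw [b3_eq f, b3_eq g x, b3_eq g (f x), b3_eq f x]; ring

lemma b3_ext (f g : B3 ≃+ B3) (h : f 1 = g 1) : f = g :=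
  AddEquiv.ext fun x => by rw [b3_eq f x, h, ← b3_eq g x]

/-- `T(φ,ε,δ)` maps `H` onto `H` iff `φ = id` and `ε = δ`; likewise for `H'`. -/
theorem stmt9 (α φ : A2 ≃+ A2) (β ε δ : B3 ≃+ B3) :
    (Tmap φ ε δ '' Hsub α β = Hsub α β ↔ (φ = AddEquiv.refl A2 ∧ ε = δ)) ∧
    (Tmap φ ε δ '' H'sub α β = H'sub α β ↔ (φ = AddEquiv.refl A2 ∧ ε = δ)) := by
  constructor
  · constructor
    · intro hset
      have key : ∀ a b, ∃ a' b',
          (((φ a, ε b), (α a, δ (β b), δ 0)) : W) = ((a', b'), (α a', β b', 0)) := by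
        intro a b
        have hm : Tmap φ ε δ ((a, b), (α a, β b, 0)) ∈ Hsub α β := by
          rw [← hset]; exact Set.mem_image_of_mem _ ⟨a, b, rfl⟩
        obtain ⟨a', b', h⟩ := hm
        exact ⟨a', b', h⟩
      have hφ : ∀ a, α a = α (φ a) := by
        intro a
        obtain ⟨a', b', h⟩ := key a 0
        simp only [Prod.mk.injEq] at h
        rw [h.2.1, h.1.1]
      have hδβ : ∀ b, δ (β b) = β (ε b) := by
        intro b
        obtain ⟨a', b', h⟩ := key 0 b
        simp only [Prod.mk.injEq] at h
        rw [h.2.2.1, h.1.2]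
      refine ⟨AddEquiv.ext fun a => α.injective (hφ a).symm, ?_⟩
      apply b3_ext
      have h1 := hδβ 1
      rw [b3_eq δ, b3_eq β (ε 1), b3_eq ε 1] at h1
      have := mul_left_cancel₀ (b3_one_ne β) (by linear_combination -h1 : β 1 * ε 1 = β 1 * δ 1)
      simpa using this
    · rintro ⟨rfl, rfl⟩
      ext p
      constructor
      · rintro ⟨q, ⟨a, b, rfl⟩, rfl⟩
        exact ⟨a, ε b, by simp [Tmap, b3_comm ε β b]⟩
      · rintro ⟨a, b, rfl⟩
        refine ⟨((a, ε.symm b), (α a, β (ε.symm b), 0)), ⟨a, ε.symm b, rfl⟩, ?_⟩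
        simp [Tmap, b3_comm ε β (ε.symm b)]
  · constructor
    · intro hset
      have key : ∀ a b, ∃ a' b',
          (((φ a, ε b), (α a, δ 0, δ (β b))) : W) = ((a', b'), (α a', 0, β b')) := by
        intro a b
        have hm : Tmap φ ε δ ((a, b), (α a, 0, β b)) ∈ H'sub α β := by
          rw [← hset]; exact Set.mem_image_of_mem _ ⟨a, b, rfl⟩
        obtain ⟨a', b', h⟩ := hm
        exact ⟨a', b', h⟩
      have hφ : ∀ a, α a = α (φ a) := by
        intro a
        obtain ⟨a', b', h⟩ := key a 0
        simp only [Prod.mk.injEq] at h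
        rw [h.2.1, h.1.1]
      have hδβ : ∀ b, δ (β b) = β (ε b) := by
        intro b
        obtain ⟨a', b', h⟩ := key 0 b
        simp only [Prod.mk.injEq] at h
        rw [h.2.2.2, h.1.2]
      refine ⟨AddEquiv.ext fun a => α.injective (hφ a).symm, ?_⟩
      apply b3_ext
      have h1 := hδβ 1
      rw [b3_eq δ, b3_eq β (ε 1), b3_eq ε 1] at h1
      have := mul_left_cancel₀ (b3_one_ne β) (by linear_combination -h1 : β 1 * ε 1 = β 1 * δ 1)
      simpa using this
    · rintro ⟨rfl, rfl⟩
      ext p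
      constructor
      · rintro ⟨q, ⟨a, b, rfl⟩, rfl⟩
        exact ⟨a, ε b, by simp [Tmap, b3_comm ε β b]⟩
      · rintro ⟨a, b, rfl⟩
        refine ⟨((a, ε.symm b), (α a, 0, β (ε.symm b))), ⟨a, ε.symm b, rfl⟩, ?_⟩
        simp [Tmap, b3_comm ε β (ε.symm b)]
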